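/- Let p, q be coprime integers with q ≥ 1, and let δ = (1 − (−1)^q)/2 ∈ {0,1} be the parity of q (δ = 1 iff q is odd). Then there exist a ∈ ℤ with gcd(a,q) = 1 and b ∈ ℝ such that for every admissible n ∈ {0,…,q−1}, the real number (2πa/q)·(n/(2−δ))² + b − θ_n is an integer multiple of 2π. -/

import Mathlib

/-- The generalized quadratic Gauss sum `G(-p, n, q) = ∑_{k=0}^{q-1} e(( -p k² + n k)/q)`. -/
noncomputable def Gm (p : ℤ) (q : ℕ) (n : ℤ) : ℂ :=
  ∑ k ∈ Finset.range q,
    Complex.exp (2 * Real.pi * Complex.I *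
      ((-(p : ℂ) * (k : ℂ) ^ 2 + (n : ℂ) * (k : ℂ)) / (q : ℂ)))

open Finset Complex

noncomputable def psi (q : ℕ) (m : ℤ) : ℂ :=
  Complex.exp (2 * Real.pi * Complex.I * m / q)

lemma psi_add (q : ℕ) (m₁ m₂ : ℤ) : psi q (m₁ + m₂) = psi q m₁ * psi q m₂ := by
  rw [psi, psi, psi, ← Complex.exp_add]
  congr 1
  push_cast
  ring

lemma psi_eq_exp_real (q : ℕ) (m : ℤ) :
    psi q m = Complex.exp ((2 * Real.pi * (m : ℝ) / q : ℝ) * Complex.I) := by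
  rw [psi]
  congr 1
  push_cast
  ring

lemma psi_zero (q : ℕ) : psi q 0 = 1 := by simp [psi]

lemma psi_q_mul (q : ℕ) (hq : 0 < q) (j : ℤ) : psi q ((q : ℤ) * j) = 1 := by
  rw [psi]
  have hq0 : (q : ℂ) ≠ 0 := Nat.cast_ne_zero.mpr hq.ne'
  have : 2 * Real.pi * Complex.I * ((q : ℤ) * j : ℤ) / q = (j : ℤ) * (2 * Real.pi * Complex.I) := by
    field_simp
    push_cast
    ring
  rw [this, Complex.exp_int_mul_two_pi_mul_I]

lemma psi_congr (q : ℕ) (hq : 0 < q) {m m' : ℤ} (h : (q : ℤ) ∣ (m - m')) :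
    psi q m = psi q m' := by
  obtain ⟨j, hj⟩ := h
  have : m = m' + (q : ℤ) * j := by linarith
  rw [this, psi_add, psi_q_mul q hq, mul_one]

lemma conj_psi (q : ℕ) (m : ℤ) : (starRingEnd ℂ) (psi q m) = psi q (-m) := by
  rw [psi_eq_exp_real, psi_eq_exp_real, ← Complex.exp_conj]
  congr 1
  simp [Complex.conj_I, map_ofNat]
  push_cast
  ring

lemma psi_eq_one (q : ℕ) (hq : 0 < q) {c : ℤ} (h : (q : ℤ) ∣ c) : psi q c = 1 := by
  have : (q : ℤ) ∣ c - 0 := by simpa using h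
  rw [psi_congr q hq this, psi_zero]

lemma psi_ne_one (q : ℕ) (hq : 0 < q) {c : ℤ} (h : ¬ (q : ℤ) ∣ c) : psi q c ≠ 1 := by
  intro hc
  rw [psi, Complex.exp_eq_one_iff] at hc
  obtain ⟨k, hk⟩ := hc
  apply h
  refine ⟨k, ?_⟩
  have hq0 : (q : ℂ) ≠ 0 := Nat.cast_ne_zero.mpr hq.ne'
  have hpi : (Real.pi : ℂ) ≠ 0 := by exact_mod_cast Real.pi_ne_zero
  have h2 : (2 * (Real.pi:ℂ) * Complex.I) ≠ 0 := by
    simp [Real.pi_ne_zero, Complex.I_ne_zero]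
  have h3 : (2 * (Real.pi:ℂ) * Complex.I) * ((c:ℂ)/q) = (2 * (Real.pi:ℂ) * Complex.I) * k := by
    linear_combination hk
  have h4 : (c : ℂ)/q = k := mul_left_cancel₀ h2 h3
  have : (c : ℂ) = (q : ℂ) * k := by
    field_simp at h4
    linear_combination h4
  exact_mod_cast this

lemma psi_nat_pow (q : ℕ) (c : ℤ) (l : ℕ) : psi q (c * l) = psi q c ^ l := by
  have : psi q (c * l) = Complex.exp ((l : ℂ) * (2 * Real.pi * Complex.I * c / q)) := by
    rw [psi]
    congr 1
    push_cast
    ring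
  rw [this, Complex.exp_nat_mul, psi]

lemma sum_psi (q : ℕ) (hq : 0 < q) (c : ℤ) :
    ∑ l ∈ Finset.range q, psi q (c * l) = if (q : ℤ) ∣ c then (q : ℂ) else 0 := by
  split_ifs with h
  · have h1 : ∑ l ∈ Finset.range q, psi q (c * (l:ℤ)) = ∑ _l ∈ Finset.range q, (1:ℂ) :=
      Finset.sum_congr rfl fun l _ => psi_eq_one q hq (h.mul_right _)
    rw [h1]
    simp
  · have h1 : psi q c ≠ 1 := psi_ne_one q hq h
    calc ∑ l ∈ Finset.range q, psi q (c * l) = ∑ l ∈ Finset.range q, psi q c ^ l := by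
          refine Finset.sum_congr rfl fun l _ => psi_nat_pow q c l
      _ = (psi q c ^ q - 1) / (psi q c - 1) := geom_sum_eq h1 q
      _ = 0 := by
          rw [← psi_nat_pow, mul_comm, psi_q_mul q hq]
          simp
section Shift

variable (q : ℕ) (g : ℤ → ℂ)

lemma shift_nat (hper : ∀ k : ℤ, g (k + q) = g k) (s : ℕ) :
    ∑ k ∈ Finset.range q, g ((k : ℤ) + (s : ℤ)) = ∑ k ∈ Finset.range q, g (k : ℤ) := by
  induction s with
  | zero => simp
  | succ s ih =>
    have key : ∑ k ∈ Finset.range q, g ((k : ℤ) + (s : ℤ) + 1)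
        = ∑ k ∈ Finset.range q, g ((k : ℤ) + (s : ℤ)) := by
      have h1 := Finset.sum_range_succ' (fun k : ℕ => g ((k : ℤ) + (s : ℤ))) q
      have h2 := Finset.sum_range_succ (fun k : ℕ => g ((k : ℤ) + (s : ℤ))) q
      have h3 : g ((q : ℤ) + (s : ℤ)) = g ((0 : ℕ) + (s : ℤ)) := by
        have := hper (s : ℤ)
        simp only [Int.natCast_zero, zero_add]
        rw [add_comm] at this
        exact this
      have h4 : ∀ k : ℕ, g (((k + 1 : ℕ) : ℤ) + (s : ℤ)) = g ((k : ℤ) + (s : ℤ) + 1) := by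
        intro k
        have : (((k + 1 : ℕ) : ℤ) + (s : ℤ)) = (k : ℤ) + (s : ℤ) + 1 := by push_cast; ring
        rw [this]
      calc ∑ k ∈ Finset.range q, g ((k : ℤ) + (s : ℤ) + 1)
          = ∑ k ∈ Finset.range q, g (((k + 1 : ℕ) : ℤ) + (s : ℤ)) := by
            exact Finset.sum_congr rfl fun k _ => (h4 k).symm
        _ = ∑ k ∈ Finset.range (q + 1), g ((k : ℤ) + (s : ℤ)) - g ((0:ℕ) + (s:ℤ)) := by
            rw [h1]; push_cast; ring
        _ = ∑ k ∈ Finset.range q, g ((k : ℤ) + (s : ℤ)) := by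
            rw [h2, h3]; push_cast; ring
    have hcast : ∀ k : ℕ, g ((k : ℤ) + ((s+1 : ℕ) : ℤ)) = g ((k : ℤ) + (s : ℤ) + 1) := by
      intro k
      have : ((k : ℤ) + ((s+1 : ℕ) : ℤ)) = (k : ℤ) + (s : ℤ) + 1 := by push_cast; ring
      rw [this]
    rw [Finset.sum_congr rfl fun k _ => hcast k, key, ih]

lemma shift_int (hq : 0 < q) (hper : ∀ k : ℤ, g (k + q) = g k) (t : ℤ) :
    ∑ k ∈ Finset.range q, g ((k : ℤ) + t) = ∑ k ∈ Finset.range q, g (k : ℤ) := by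
  have hperN : ∀ (k : ℤ) (j : ℕ), g (k + (q : ℤ) * j) = g k := by
    intro k j
    induction j with
    | zero => simp
    | succ j ih =>
      have : k + (q:ℤ) * (j+1 : ℕ) = (k + (q:ℤ)*j) + q := by push_cast; ring
      rw [this, hper, ih]
  set N : ℕ := t.natAbs with hN
  have hnonneg : 0 ≤ t + (q:ℤ) * N := by
    have h1 : (N : ℤ) = |t| := Int.abs_eq_natAbs t ▸ rfl
    have h2 : (q : ℤ) ≥ 1 := by exact_mod_cast hq
    nlinarith [abs_nonneg t, neg_abs_le t]
  set s : ℕ := (t + (q:ℤ) * N).toNat with hs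
  have hsval : (s : ℤ) = t + (q:ℤ) * N := Int.toNat_of_nonneg hnonneg
  have heq : ∀ k : ℕ, g ((k:ℤ) + t) = g ((k:ℤ) + (s:ℤ)) := by
    intro k
    rw [hsval, ← add_assoc, hperN ((k:ℤ) + t) N]
  rw [Finset.sum_congr rfl fun k _ => heq k, shift_nat q g hper s]

end Shift


lemma Gm_eq_sum_psi (p : ℤ) (q : ℕ) (n : ℤ) :
    Gm p q n = ∑ k ∈ Finset.range q, psi q (-p * (k : ℤ) ^ 2 + n * k) := by
  refine Finset.sum_congr rfl fun k _ => ?_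
  rw [psi]
  congr 1
  push_cast
  ring

lemma f_periodic (p : ℤ) (q : ℕ) (n : ℤ) (k : ℤ) :
    (q : ℤ) ∣ ((-p * (k + q) ^ 2 + n * (k + q)) - (-p * k ^ 2 + n * k)) :=
  ⟨-2*p*k - p*q + n, by ring⟩

lemma Gm_congr (p : ℤ) (q : ℕ) (hq : 0 < q) {n n' : ℤ} (h : (q : ℤ) ∣ (n - n')) :
    Gm p q n = Gm p q n' := by
  rw [Gm_eq_sum_psi, Gm_eq_sum_psi]
  refine Finset.sum_congr rfl fun k _ => ?_
  refine psi_congr q hq ?_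
  have : (-p * (k:ℤ) ^ 2 + n * k) - (-p * (k:ℤ) ^ 2 + n' * k) = (n - n') * k := by ring
  rw [this]
  exact h.mul_right _

lemma Gm_shift (p : ℤ) (q : ℕ) (hq : 0 < q) (n t : ℤ) :
    Gm p q n = psi q (-p * t ^ 2 + n * t) * Gm p q (n - 2 * p * t) := by
  rw [Gm_eq_sum_psi, Gm_eq_sum_psi, Finset.mul_sum]
  have h1 : ∀ k : ℕ, psi q (-p * t ^ 2 + n * t) * psi q (-p * (k:ℤ) ^ 2 + (n - 2*p*t) * k)
      = psi q (-p * ((k:ℤ) + t) ^ 2 + n * ((k:ℤ) + t)) := by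
    intro k
    rw [← psi_add]
    congr 1
    ring
  rw [Finset.sum_congr rfl fun k _ => h1 k]
  have hper : ∀ k : ℤ, psi q (-p * (k + q) ^ 2 + n * (k + q)) = psi q (-p * k ^ 2 + n * k) :=
    fun k => psi_congr q hq (f_periodic p q n k)
  exact (shift_int q (fun k => psi q (-p * k ^ 2 + n * k)) hq hper t).symm

lemma Gm_mul_conj (p : ℤ) (q : ℕ) (hq : 0 < q) (n : ℤ) :
    Gm p q n * (starRingEnd ℂ) (Gm p q n)
      = ∑ d ∈ Finset.range q, (if (q : ℤ) ∣ 2 * p * d then psi q (n * d - p * d ^ 2) * q else 0) := by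
  rw [Gm_eq_sum_psi, map_sum]
  rw [Finset.sum_congr rfl fun (l : ℕ) _ => conj_psi q (-p * (l:ℤ)^2 + n * l)]
  rw [Finset.sum_mul_sum]
  rw [Finset.sum_comm]
  have step1 : ∀ l : ℕ,
      ∑ k ∈ Finset.range q, psi q (-p * (k:ℤ)^2 + n*k) * psi q (-(-p * (l:ℤ)^2 + n*l))
        = ∑ d ∈ Finset.range q, psi q (n*d - p*d^2) * psi q ((-2*p*(d:ℤ)) * l) := by
    intro l
    have e1 : ∀ k : ℕ, psi q (-p * (k:ℤ)^2 + n*k) * psi q (-(-p * (l:ℤ)^2 + n*l))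
        = psi q ((-p * (k:ℤ)^2 + n*k) - (-p * (l:ℤ)^2 + n*l)) := by
      intro k
      rw [← psi_add, sub_eq_add_neg]
    rw [Finset.sum_congr rfl fun k _ => e1 k]
    set G : ℤ → ℂ := fun k => psi q ((-p * k^2 + n*k) - (-p * (l:ℤ)^2 + n*l)) with hG
    have hper : ∀ k : ℤ, G (k + q) = G k := by
      intro k
      refine psi_congr q hq ?_
      have : ((-p * (k+q)^2 + n*(k+q)) - (-p * (l:ℤ)^2 + n*l))
          - ((-p * k^2 + n*k) - (-p * (l:ℤ)^2 + n*l))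
          = (-p * (k+q)^2 + n*(k+q)) - (-p * k^2 + n*k) := by ring
      rw [this]
      exact f_periodic p q n k
    have := (shift_int q G hq hper (l : ℤ)).symm
    rw [this]
    refine Finset.sum_congr rfl fun d _ => ?_
    show psi q _ = _
    rw [← psi_add]
    congr 1
    ring
  rw [Finset.sum_congr rfl fun l _ => step1 l]
  rw [Finset.sum_comm]
  refine Finset.sum_congr rfl fun d _ => ?_
  rw [← Finset.mul_sum, sum_psi q hq (-2*p*(d:ℤ))]
  have hiff : ((q:ℤ) ∣ -2*p*(d:ℤ)) ↔ ((q:ℤ) ∣ 2*p*(d:ℤ)) := by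
    constructor
    · intro h; have := h.neg_right; simpa using (dvd_neg.mpr h)
    · intro h; simpa using (dvd_neg.mpr h)
  split_ifs with h1 h2 h2
  · ring
  · exact absurd (hiff.mp h1) h2
  · exact absurd (hiff.mpr h2) h1
  · simp
lemma Gm_ne_zero (p : ℤ) (q : ℕ) (hq : 0 < q) (n : ℤ)
    (H : ∀ d : ℤ, (q : ℤ) ∣ 2 * p * d → (q : ℤ) ∣ n * d - p * d ^ 2) :
    Gm p q n ≠ 0 := by
  intro h0
  have h1 := Gm_mul_conj p q hq n
  rw [h0] at h1
  simp only [zero_mul] at h1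
  have h2 : ∀ d ∈ Finset.range q,
      (if (q : ℤ) ∣ 2 * p * (d:ℤ) then psi q (n * d - p * (d:ℤ) ^ 2) * q else 0)
        = (if (q : ℤ) ∣ 2 * p * (d:ℤ) then (q : ℂ) else 0) := by
    intro d _
    split_ifs with hd
    · rw [psi_eq_one q hq (H d hd), one_mul]
    · rfl
  rw [Finset.sum_congr rfl h2, ← Finset.sum_filter] at h1
  have h3 : (0:ℕ) ∈ (Finset.range q).filter (fun d : ℕ => (q : ℤ) ∣ 2 * p * (d:ℤ)) := by
    simp [Finset.mem_filter, hq]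
  rw [Finset.sum_const] at h1
  have hcard : ((Finset.range q).filter (fun d : ℕ => (q : ℤ) ∣ 2 * p * (d:ℤ))).card ≠ 0 :=
    Finset.card_ne_zero_of_mem h3
  have hqC : (q : ℂ) ≠ 0 := Nat.cast_ne_zero.mpr hq.ne'
  rw [nsmul_eq_mul] at h1
  exact (mul_ne_zero (Nat.cast_ne_zero.mpr hcard) hqC) h1.symm

lemma Gm_ne_zero_odd (p : ℤ) (q : ℕ) (hq : 0 < q) (hodd : Odd q)
    (hpq : Int.gcd p (q : ℤ) = 1) (n : ℤ) : Gm p q n ≠ 0 := by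
  refine Gm_ne_zero p q hq n fun d hd => ?_
  have hcp : IsCoprime (q : ℤ) p := by
    rw [Int.isCoprime_iff_gcd_eq_one, Int.gcd_comm]
    exact hpq
  have hc2 : IsCoprime (q : ℤ) 2 := by
    rw [Int.isCoprime_iff_gcd_eq_one]
    have h2 : Int.gcd (q : ℤ) 2 = Nat.gcd q 2 := rfl
    rw [h2]
    exact Nat.coprime_two_right.mpr hodd
  have hc : IsCoprime (q : ℤ) (2 * p) := hc2.mul_right hcp
  have hdd : (q : ℤ) ∣ d := hc.dvd_of_dvd_mul_left hd
  have : n * d - p * d ^ 2 = d * (n - p * d) := by ring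
  rw [this]
  exact hdd.mul_right _

lemma Gm_ne_zero_even (p : ℤ) (q : ℕ) (r : ℕ) (hr : 0 < r) (hqr : q = 2 * r)
    (hpq : Int.gcd p (q : ℤ) = 1) (n : ℤ) (hn : (2:ℤ) ∣ n - p * r) : Gm p q n ≠ 0 := by
  have hq : 0 < q := by omega
  refine Gm_ne_zero p q hq n fun d hd => ?_
  have hcp : IsCoprime (r : ℤ) p := by
    have h1 : IsCoprime (q : ℤ) p := by
      rw [Int.isCoprime_iff_gcd_eq_one, Int.gcd_comm]; exact hpq
    have hdvd : (r:ℤ) ∣ (q:ℤ) := ⟨2, by push_cast [hqr]; ring⟩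
    exact IsCoprime.of_isCoprime_of_dvd_left h1 hdvd
  have hrd : (r : ℤ) ∣ d := by
    have h1 : (r : ℤ) ∣ p * d := by
      obtain ⟨x, hx⟩ := hd
      refine ⟨x, ?_⟩
      have : (q : ℤ) = 2 * r := by exact_mod_cast hqr
      rw [this] at hx
      linarith
    exact hcp.dvd_of_dvd_mul_left h1
  obtain ⟨e, he⟩ := hrd
  have h2 : (2:ℤ) ∣ e * (n - p * r * e) := by
    rcases Int.even_or_odd e with ⟨y, hy⟩ | ⟨y, hy⟩
    · have he2 : (2:ℤ) ∣ e := ⟨y, by omega⟩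
      exact he2.mul_right _
    · obtain ⟨z, hz⟩ := hn
      have h3 : (2:ℤ) ∣ (n - p * r * e) := ⟨z - p * (r:ℤ) * y, by linear_combination hz - p * (r:ℤ) * hy⟩
      exact h3.mul_left e
  obtain ⟨w, hw⟩ := h2
  refine ⟨w, ?_⟩
  have hqz : (q : ℤ) = 2 * r := by exact_mod_cast hqr
  rw [he, hqz]
  have : n * ((r:ℤ) * e) - p * ((r:ℤ) * e) ^ 2 = (r:ℤ) * (e * (n - p * r * e)) := by ring
  rw [this, hw]
  ring
lemma arg_shift (θ : ℝ) (z w : ℂ) (hz : z ≠ 0) (h : w = Complex.exp ((θ:ℂ) * Complex.I) * z) :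
    ∃ m : ℤ, θ + z.arg - w.arg = 2 * Real.pi * m := by
  have hw : w ≠ 0 := by
    rw [h]; exact mul_ne_zero (Complex.exp_ne_zero _) hz
  have habs : ‖w‖ = ‖z‖ := by
    rw [h, norm_mul, Complex.norm_exp_ofReal_mul_I, one_mul]
  have h1 := Complex.norm_mul_exp_arg_mul_I w
  have h2 := Complex.norm_mul_exp_arg_mul_I z
  have hzabs : (‖z‖ : ℂ) ≠ 0 := by
    simpa using (norm_ne_zero_iff.mpr hz)
  have h3 : Complex.exp ((w.arg : ℂ) * Complex.I)
      = Complex.exp (((θ : ℂ) + z.arg) * Complex.I) := by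
    have e1 : (‖z‖ : ℂ) * Complex.exp ((w.arg : ℂ) * Complex.I) = w := by
      rw [← habs]
      exact h1
    have e2 : (‖z‖ : ℂ) * Complex.exp (((θ : ℂ) + z.arg) * Complex.I) = w := by
      rw [h]
      calc (‖z‖ : ℂ) * Complex.exp (((θ : ℂ) + z.arg) * Complex.I)
          = Complex.exp ((θ:ℂ) * Complex.I)
            * ((‖z‖ : ℂ) * Complex.exp ((z.arg : ℂ) * Complex.I)) := by
            rw [add_mul, Complex.exp_add]; ring
        _ = Complex.exp ((θ:ℂ) * Complex.I) * z := by rw [h2]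
    have := e1.trans e2.symm
    exact mul_left_cancel₀ hzabs this
  rw [Complex.exp_eq_exp_iff_exists_int] at h3
  obtain ⟨m, hm⟩ := h3
  refine ⟨-m, ?_⟩
  have hI : (Complex.I : ℂ) ≠ 0 := Complex.I_ne_zero
  have hm2 : (w.arg : ℂ) = (θ : ℂ) + z.arg + m * (2 * Real.pi) := by
    have : (w.arg : ℂ) * Complex.I = ((θ : ℂ) + z.arg + m * (2 * Real.pi)) * Complex.I := by
      rw [hm]; ring
    exact mul_right_cancel₀ hI this
  have hm3 : (w.arg : ℝ) = θ + z.arg + m * (2 * Real.pi) := by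
    exact_mod_cast hm2
  push_cast
  linarith

lemma exists_bez (x : ℤ) (q : ℕ) (h : Int.gcd x (q:ℤ) = 1) :
    ∃ u c : ℤ, x * u = 1 + (q:ℤ) * c := by
  have hb := Int.gcd_eq_gcd_ab x (q:ℤ)
  rw [h] at hb
  exact ⟨Int.gcdA x q, -(Int.gcdB x q), by push_cast at hb ⊢; linarith⟩

/-- `δ = (1 - (-1)^q)/2`, the parity of `q` (`δ = 1` iff `q` is odd). -/
def par (q : ℕ) : ℤ := (1 - (-1 : ℤ) ^ q) / 2

lemma par_odd (q : ℕ) (h : Odd q) : par q = 1 := by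
  rw [par, h.neg_one_pow]
  decide

lemma par_even (q : ℕ) (h : Even q) : par q = 0 := by
  rw [par, h.neg_one_pow]
  decide

/-- `θ_n`, the argument of `G(-p, n, q)`. -/
noncomputable def theta (p : ℤ) (q : ℕ) (n : ℕ) : ℝ := (Gm p q (n : ℤ)).arg

/-- `n` is admissible when `4 ∤ (2n + 2 - q)`. -/
def Adm (q n : ℕ) : Prop := ¬ ((4 : ℤ) ∣ (2 * (n : ℤ) + 2 - (q : ℤ)))

theorem stmt5 (p : ℤ) (q : ℕ) (hq : 1 ≤ q) (hpq : Int.gcd p (q : ℤ) = 1) :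
    ∃ (a : ℤ) (b : ℝ), Int.gcd a (q : ℤ) = 1 ∧
      ∀ n : ℕ, n < q → Adm q n →
        ∃ m : ℤ,
          (2 * Real.pi * (a : ℝ) / (q : ℝ)) * ((n : ℝ) / (2 - (par q : ℝ))) ^ 2
            + b - theta p q n = 2 * Real.pi * (m : ℝ) := by
  have hq0 : 0 < q := hq
  have hqR : (q : ℝ) ≠ 0 := Nat.cast_ne_zero.mpr hq0.ne'
  rcases Nat.even_or_odd q with hev | hodd
  · -- even case
    obtain ⟨r', hr'⟩ := hev
    set r : ℕ := r' with hrdef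
    have hqr : q = 2 * r := by omega
    have hr : 0 < r := by omega
    obtain ⟨u, c, huc⟩ := exists_bez p q hpq
    have hqz : (q : ℤ) = 2 * (r:ℤ) := by exact_mod_cast hqr
    set n₀ : ℕ := r % 2 with hn₀def
    have hn₀z : (n₀ : ℤ) = (r : ℤ) % 2 := by
      rw [hn₀def]; push_cast; ring
    refine ⟨u, theta p q n₀ - (2 * Real.pi * (u:ℝ) / q) * (((n₀:ℕ):ℝ)/2)^2, ?_, ?_⟩
    · rw [← Int.isCoprime_iff_gcd_eq_one]
      exact ⟨p, -c, by linear_combination huc⟩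
    · intro n hn hadm
      rw [Adm] at hadm
      have hpar2 : (2:ℤ) ∣ (n:ℤ) - (r:ℤ) := by omega
      have hn0 : (2:ℤ) ∣ (n:ℤ) - (n₀:ℤ) := by omega
      obtain ⟨s, hs⟩ := hn0
      set w : ℤ := (n:ℤ) - s with hwdef
      set t : ℤ := u * s with htdef
      have hshift := Gm_shift p q hq0 (n:ℤ) t
      have hcong : Gm p q ((n:ℤ) - 2 * p * t) = Gm p q (n₀:ℤ) := by
        refine Gm_congr p q hq0 ⟨-2*s*c, by linear_combination hs + (-2*s) * huc⟩
      -- p is odd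
      have hpodd : ¬ (2:ℤ) ∣ p := by
        intro h2p
        have h2q : (2:ℤ) ∣ (q:ℤ) := ⟨(r:ℤ), hqz⟩
        have := Int.dvd_gcd h2p h2q
        rw [hpq] at this
        norm_num at this
      obtain ⟨k, hk⟩ : ∃ k, p = 2*k+1 := by
        rcases Int.even_or_odd p with ⟨y, hy⟩ | ⟨y, hy⟩
        · exact absurd ⟨y, by omega⟩ hpodd
        · exact ⟨y, by omega⟩
      have hz : Gm p q (n₀:ℤ) ≠ 0 := by
        refine Gm_ne_zero_even p q r hr hqr hpq _ ?_
        obtain ⟨v, hv⟩ : (2:ℤ) ∣ (n₀:ℤ) - (r:ℤ) := by omega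
        exact ⟨v - k*(r:ℤ), by linear_combination hv - (r:ℤ) * hk⟩
      have hwG : Gm p q (n:ℤ)
          = Complex.exp (((2 * Real.pi * ((-p*t^2 + (n:ℤ)*t : ℤ):ℝ) / q : ℝ) : ℂ) * Complex.I)
            * Gm p q (n₀:ℤ) := by
        rw [hshift, hcong, psi_eq_exp_real]
      obtain ⟨m₁, hm₁⟩ := arg_shift _ _ _ hz hwG
      set K : ℤ := u * s^2 * c with hKdef
      have key : u * s * w = (-p*t^2 + (n:ℤ)*t) + (q:ℤ) * K := by
        rw [hwdef, htdef, hKdef]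
        linear_combination (u*s^2) * huc
      refine ⟨m₁ + K, ?_⟩
      have hparq : par q = 0 := par_even q ⟨r, by omega⟩
      rw [hparq]
      have keyR : (u:ℝ) * (s:ℝ) * (w:ℝ) = ((-p*t^2 + (n:ℤ)*t : ℤ):ℝ) + (q:ℝ) * (K:ℝ) := by
        exact_mod_cast key
      have hsR : (n:ℝ) - (n₀:ℝ) = 2 * (s:ℝ) := by exact_mod_cast hs
      have hwR : (w:ℝ) = (n:ℝ) - (s:ℝ) := by
        rw [hwdef]; push_cast; ring
      have hdiff : (n:ℝ)^2 - ((n₀:ℕ):ℝ)^2 = 4 * (s:ℝ) * (w:ℝ) := by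
        have hn0R : ((n₀:ℕ):ℝ) = (n:ℝ) - 2*(s:ℝ) := by linarith
        rw [hn0R, hwR]; ring
      have halg : (2 * Real.pi * (u:ℝ) / q) * ((n:ℝ)/2)^2
            - (2 * Real.pi * (u:ℝ) / q) * (((n₀:ℕ):ℝ)/2)^2
          = 2 * Real.pi * ((-p*t^2 + (n:ℤ)*t : ℤ):ℝ) / q + 2 * Real.pi * (K:ℝ) := by
        have h4 : (2 * Real.pi * (u:ℝ) / q) * ((n:ℝ)/2)^2
              - (2 * Real.pi * (u:ℝ) / q) * (((n₀:ℕ):ℝ)/2)^2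
            = (2 * Real.pi / q) * ((u:ℝ) * (((n:ℝ)^2 - ((n₀:ℕ):ℝ)^2)/4)) := by
          ring
        rw [h4, hdiff]
        have h5 : (u:ℝ) * ((4 * (s:ℝ) * (w:ℝ)) / 4) = ((-p*t^2 + (n:ℤ)*t : ℤ):ℝ) + (q:ℝ) * (K:ℝ) := by
          rw [← keyR]; ring
        rw [h5]
        field_simp
      have hth0 : theta p q n₀ = (Gm p q (n₀:ℤ)).arg := rfl
      have hthn : theta p q n = (Gm p q (n:ℤ)).arg := rfl
      rw [hth0, hthn]
      have : (2 - (0:ℝ)) = 2 := by norm_num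
      push_cast
      linarith [hm₁, halg]
  · -- odd case
    have h2p : Int.gcd (2*p) (q:ℤ) = 1 := by
      rw [← Int.isCoprime_iff_gcd_eq_one]
      have hp : IsCoprime p (q:ℤ) := Int.isCoprime_iff_gcd_eq_one.mpr hpq
      have h2 : IsCoprime (2:ℤ) (q:ℤ) := by
        rw [Int.isCoprime_iff_gcd_eq_one]
        have h2' : Int.gcd (2:ℤ) (q:ℤ) = Nat.gcd 2 q := rfl
        rw [h2']
        exact Nat.coprime_two_left.mpr hodd
      exact h2.mul_left hp
    obtain ⟨u, c, huc⟩ := exists_bez (2*p) q h2p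
    refine ⟨u - p*u^2, theta p q 0, ?_, ?_⟩
    · rw [← Int.isCoprime_iff_gcd_eq_one]
      exact ⟨4*p, (q:ℤ)*c^2, by linear_combination (1 - 2*p*u - (q:ℤ)*c) * huc⟩
    · intro n hn _
      set t : ℤ := u * (n:ℤ) with htdef
      have hshift := Gm_shift p q hq0 (n:ℤ) t
      have hcong : Gm p q ((n:ℤ) - 2 * p * t) = Gm p q 0 := by
        refine Gm_congr p q hq0 ⟨-((n:ℤ)*c), by linear_combination (-(n:ℤ)) * huc⟩
      have hphase : -p*t^2 + (n:ℤ)*t = (u - p*u^2) * (n:ℤ)^2 := by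
        rw [htdef]; ring
      have hz : Gm p q 0 ≠ 0 := Gm_ne_zero_odd p q hq0 hodd hpq 0
      have hwG : Gm p q (n:ℤ)
          = Complex.exp (((2 * Real.pi * (((u - p*u^2) * (n:ℤ)^2 : ℤ):ℝ) / q : ℝ) : ℂ) * Complex.I)
            * Gm p q 0 := by
        rw [hshift, hcong, hphase, psi_eq_exp_real]
      obtain ⟨m, hm⟩ := arg_shift _ _ _ hz hwG
      refine ⟨m, ?_⟩
      have hparq : par q = 1 := par_odd q hodd
      rw [hparq]
      have hth0 : theta p q 0 = (Gm p q (0:ℤ)).arg := by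
        rw [theta]; norm_num
      have hthn : theta p q n = (Gm p q (n:ℤ)).arg := rfl
      rw [hth0, hthn]
      have halg : (2 * Real.pi * ((u - p*u^2 : ℤ):ℝ) / q) * ((n:ℝ)/(2 - ((1:ℤ):ℝ)))^2
          = 2 * Real.pi * (((u - p*u^2) * (n:ℤ)^2 : ℤ):ℝ) / q := by
        push_cast
        ring
      linarith [hm, halg]
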